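/- arXiv:1303.1560 — 2 statements merged into one kernel-verified Lean document; each statement's English description precedes it below -/
import Mathlib

section
/- Let ω ∈ Ω, q ≥ 1, and let h_q = b_ω, c_ω, or d_ω according as the q-th letter ω_q of ω equals 2, 1, or 0. Then for every g ∈ G_ω and every geodesic representation g = s_1⋯s_n (n = |g|, s_i ∈ A_ω), one has L_q(g) ≤ |g| + 1 − #{i : s_i = h_q}. -/
open Equiv Filter MeasureTheory Real Set

noncomputable section

/-- The space of sequences over the alphabet `{0,1,2}`. -/
abbrev Om : Type := ℕ → Fin 3

/-- The shift transformation. -/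
def shift (ω : Om) : Om := fun n => ω (n + 1)

/-- Sequences in which each letter occurs infinitely often. -/
def OmInf : Set Om := {ω | ∀ j : Fin 3, ∀ N : ℕ, ∃ n, N ≤ n ∧ ω n = j}

/-- The automorphism of the binary rooted tree flipping the first letter (the generator `a`). -/
def flipFirst : List Bool → List Bool
  | [] => []
  | x :: v => (!x) :: v

lemma flipFirst_invol : Function.Involutive flipFirst := by
  intro v; cases v <;> simp [flipFirst]

/-- "Spinal" automorphisms of the binary rooted tree: at each vertex `1^k0` the section is `a`
if `act k` holds, the identity otherwise. -/
def spineMap : (ℕ → Bool) → List Bool → List Bool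
  | _, [] => []
  | act, false :: v => false :: (if act 0 then flipFirst v else v)
  | act, true :: v => true :: spineMap (fun n => act (n + 1)) v

lemma spineMap_invol (act : ℕ → Bool) : Function.Involutive (spineMap act) := by
  intro v
  induction v generalizing act with
  | nil => rfl
  | cons x v ih =>
    cases x with
    | false => by_cases h : act 0 <;> simp [spineMap, h, flipFirst_invol v]
    | true => simp [spineMap, ih]

/-- The generator `a` as a permutation of the vertex set of the binary rooted tree. -/
def aPerm : Equiv.Perm (List Bool) := Function.Involutive.toPerm _ flipFirst_invol

/-- The generator `b_ω`. -/
def bPerm (ω : Om) : Equiv.Perm (List Bool) :=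
  Function.Involutive.toPerm _ (spineMap_invol fun n => decide (ω n ≠ 2))

/-- The generator `c_ω`. -/
def cPerm (ω : Om) : Equiv.Perm (List Bool) :=
  Function.Involutive.toPerm _ (spineMap_invol fun n => decide (ω n ≠ 1))

/-- The generator `d_ω`. -/
def dPerm (ω : Om) : Equiv.Perm (List Bool) :=
  Function.Involutive.toPerm _ (spineMap_invol fun n => decide (ω n ≠ 0))

/-- The generating set `A_ω = {a, b_ω, c_ω, d_ω}`. -/
def gens (ω : Om) : Set (Equiv.Perm (List Bool)) := {aPerm, bPerm ω, cPerm ω, dPerm ω}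

/-- The Grigorchuk group `G_ω`. -/
def Gw (ω : Om) : Subgroup (Equiv.Perm (List Bool)) := Subgroup.closure (gens ω)

/-- Word length of a tree map relative to the generating set `A_ω`. -/
def wordLength (ω : Om) (f : List Bool → List Bool) : ℕ :=
  sInf {n | ∃ l : List (Equiv.Perm (List Bool)),
    (∀ s ∈ l, s ∈ gens ω) ∧ l.length = n ∧ ⇑l.prod = f}

/-- The ball of radius `n` in `G_ω` with respect to `A_ω`. -/
def ball (ω : Om) (n : ℕ) : Set (Equiv.Perm (List Bool)) :=
  {g | ∃ l : List (Equiv.Perm (List Bool)),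
    (∀ s ∈ l, s ∈ gens ω) ∧ l.length ≤ n ∧ l.prod = g}

/-- The growth function `γ_ω` of the group `G_ω` with respect to `A_ω`. -/
def growth (ω : Om) (n : ℕ) : ℕ := (ball ω n).ncard

end

noncomputable section

/-- The section `g_w` of a tree automorphism `g` at the vertex `w`:
`g(w ++ v) = g(w) ++ g_w(v)`. -/
def sectionMap (g : Equiv.Perm (List Bool)) (w : List Bool) : List Bool → List Bool :=
  fun v => (g (w ++ v)).drop w.length

open Classical in
/-- The number of occurrences of `x` in the list `l`. -/
def countOf (x : Equiv.Perm (List Bool)) (l : List (Equiv.Perm (List Bool))) : ℕ :=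
  l.countP fun s => decide (s = x)

/-- `L_q(g) = Σ_{w ∈ {0,1}^q} |g_w|`, word lengths of the sections being taken in
`G_{τ^q ω}` with respect to `A_{τ^q ω}`. -/
def Lq (ω : Om) (q : ℕ) (g : Equiv.Perm (List Bool)) : ℕ :=
  ∑ w : Fin q → Bool, wordLength (shift^[q] ω) (sectionMap g (List.ofFn w))

end

/-- The generator `h_q`: `b_ω`, `c_ω` or `d_ω` according as the `q`-th letter `ω_q`
(1-indexed) equals 2, 1 or 0. -/
noncomputable def hGen (ω : Om) (q : ℕ) : Equiv.Perm (List Bool) :=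
  if ω (q - 1) = 2 then bPerm ω else if ω (q - 1) = 1 then cPerm ω else dPerm ω


namespace S14

abbrev P := Equiv.Perm (List Bool)

/-! ### Sections of treelike maps -/

def fsec (f : List Bool → List Bool) (w : List Bool) : List Bool → List Bool :=
  fun v => (f (w ++ v)).drop w.length

lemma fsec_eq_sectionMap (g : P) (w : List Bool) : sectionMap g w = fsec ⇑g w := rfl

lemma fsec_nil (f : List Bool → List Bool) : fsec f [] = f := rfl

lemma fsec_id (w : List Bool) : fsec id w = id := by
  funext v; simp [fsec]

lemma fsec_flip_cons (x : Bool) (w : List Bool) : fsec flipFirst (x :: w) = id := by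
  funext v
  show (((!x) :: (w ++ v)).drop (w.length + 1)) = v
  simp

lemma fsec_flip (w : List Bool) (hw : w ≠ []) : fsec flipFirst w = id := by
  cases w with
  | nil => exact absurd rfl hw
  | cons x w' => exact fsec_flip_cons x w'

def Tl (g : List Bool → List Bool) : Prop :=
  (∀ v, (g v).length = v.length) ∧ ∀ w v, (g (w ++ v)).take w.length = g w

lemma Tl.split {g} (h : Tl g) (w v : List Bool) : g (w ++ v) = g w ++ fsec g w v := by
  conv_lhs => rw [← List.take_append_drop w.length (g (w ++ v))]
  rw [h.2 w v]; rfl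

lemma Tl.id : Tl (id : List Bool → List Bool) :=
  ⟨fun _ => rfl, fun w v => by simp [List.take_left]⟩

lemma Tl.comp {g h} (hg : Tl g) (hh : Tl h) : Tl (g ∘ h) := by
  refine ⟨fun v => (hg.1 _).trans (hh.1 v), fun w v => ?_⟩
  simp only [Function.comp_apply]
  rw [hh.split w v]
  have := hg.2 (h w) (fsec h w v)
  rwa [hh.1 w] at this

lemma fsec_comp {g h} (hg : Tl g) (hh : Tl h) (w : List Bool) :
    fsec (g ∘ h) w = fsec g (h w) ∘ fsec h w := by
  funext v
  show ((g (h (w ++ v)))).drop w.length = _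
  rw [hh.split w v, hg.split (h w) (fsec h w v)]
  have h1 : (g (h w)).length = w.length := (hg.1 _).trans (hh.1 w)
  rw [List.drop_left' h1]; rfl

lemma Tl_flip : Tl flipFirst := by
  constructor
  · intro v; cases v <;> rfl
  · intro w v
    cases w with
    | nil => rfl
    | cons x w' =>
      show (((!x) :: (w' ++ v)).take (w'.length + 1)) = _
      simp [flipFirst, List.take_left]

lemma Tl_spine (act : ℕ → Bool) : Tl (spineMap act) := by
  constructor
  · intro v
    induction v generalizing act with
    | nil => rfl
    | cons x v ih =>
      cases x with
      | false =>
        by_cases h : act 0 <;> simp [spineMap, h, Tl_flip.1]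
      | true => simp [spineMap, ih]
  · intro w
    induction w generalizing act with
    | nil => intro v; rfl
    | cons x w' ih =>
      intro v
      cases x with
      | true =>
        show ((true :: spineMap _ (w' ++ v)).take (w'.length + 1)) = _
        simp only [List.take_succ_cons, spineMap]
        rw [ih]
      | false =>
        show ((false :: (if act 0 then flipFirst (w' ++ v) else (w' ++ v))).take
          (w'.length + 1)) = _
        by_cases h : act 0 <;>
          simp [spineMap, h, List.take_left, Tl_flip.2 w' v]

/-! ### Classification of sections of spinal generators -/

lemma fsec_spine_true (act : ℕ → Bool) (w : List Bool) :
    fsec (spineMap act) (true :: w) = fsec (spineMap fun n => act (n + 1)) w := by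
  funext v
  show ((true :: spineMap _ (w ++ v)).drop (w.length + 1)) = _
  simp [fsec]

lemma fsec_spine_false (act : ℕ → Bool) (w : List Bool) :
    fsec (spineMap act) (false :: w) = fsec (if act 0 then flipFirst else id) w := by
  funext v
  show ((false :: (if act 0 then flipFirst (w ++ v) else (w ++ v))).drop (w.length + 1)) = _
  by_cases h : act 0 <;> simp [h, fsec]

lemma fsec_spine (w : List Bool) (act : ℕ → Bool) :
    fsec (spineMap act) w =
      if w = List.replicate w.length true then spineMap (fun n => act (n + w.length))
      else if w = List.replicate (w.length - 1) true ++ [false] then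
        (if act (w.length - 1) then flipFirst else id)
      else id := by
  induction w generalizing act with
  | nil =>
    simp only [List.length_nil, List.replicate_zero, if_pos rfl]
    exact fsec_nil _
  | cons x w' ih =>
    cases x with
    | true =>
      rw [fsec_spine_true, ih]
      by_cases h1 : w' = List.replicate w'.length true
      · have h2 : true :: w' = List.replicate (true :: w').length true := by
          simp [List.replicate_succ]; exact h1
        rw [if_pos h1, if_pos h2]
        refine congrArg spineMap (funext fun n => ?_)
        show act (n + w'.length + 1) = act (n + (true :: w').length)
        rfl
      · have h2 : true :: w' ≠ List.replicate (true :: w').length true := by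
          simp [List.replicate_succ]; intro h; exact h1 h
        rw [if_neg h1, if_neg h2]
        cases w' with
        | nil => exact absurd rfl h1
        | cons y t =>
          by_cases h3 : y :: t = List.replicate ((y :: t).length - 1) true ++ [false]
          · have h4 : true :: y :: t =
                List.replicate ((true :: y :: t).length - 1) true ++ [false] := by
              simp only [List.length_cons, Nat.add_sub_cancel] at h3 ⊢
              rw [List.replicate_succ]
              simpa using h3
            rw [if_pos h3, if_pos h4]
            simp [List.length_cons]
          · have h4 : true :: y :: t ≠
                List.replicate ((true :: y :: t).length - 1) true ++ [false] := by
              simp only [List.length_cons, Nat.add_sub_cancel] at h3 ⊢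
              rw [List.replicate_succ]
              simpa using h3
            rw [if_neg h3, if_neg h4]
    | false =>
      rw [fsec_spine_false]
      have h2 : false :: w' ≠ List.replicate (false :: w').length true := by
        simp [List.replicate_succ]
      rw [if_neg h2]
      cases w' with
      | nil =>
        have h3 : (false :: ([] : List Bool)) =
            List.replicate ((false :: ([] : List Bool)).length - 1) true ++ [false] := by simp
        rw [if_pos h3]
        by_cases h : act 0 <;> simp [h, fsec_nil]
      | cons y t =>
        have h3 : false :: y :: t ≠
            List.replicate ((false :: y :: t).length - 1) true ++ [false] := by
          simp only [List.length_cons, Nat.add_sub_cancel, List.replicate_succ]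
          simp
        rw [if_neg h3]
        by_cases h : act 0
        · simp only [h, if_true]
          exact fsec_flip _ (by simp)
        · simp only [h, if_false]
          exact fsec_id _

/-! ### Algebra of spinal maps -/

lemma spineMap_comp (a1 a2 : ℕ → Bool) (v : List Bool) :
    spineMap a1 (spineMap a2 v) = spineMap (fun n => xor (a1 n) (a2 n)) v := by
  induction v generalizing a1 a2 with
  | nil => rfl
  | cons x v ih =>
    cases x with
    | true => simp [spineMap, ih]
    | false =>
      have hf : ∀ u : List Bool, flipFirst (flipFirst u) = u := by
        intro u; cases u <;> simp [flipFirst]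
      by_cases h1 : a1 0 <;> by_cases h2 : a2 0 <;> simp [spineMap, h1, h2, hf]

lemma spineMap_zero (v : List Bool) : spineMap (fun _ => false) v = v := by
  induction v with
  | nil => rfl
  | cons x v ih => cases x <;> simp [spineMap, ih]

lemma spineMap_probe (n : ℕ) (act : ℕ → Bool) :
    spineMap act (List.replicate n true ++ [false, true]) =
      List.replicate n true ++ [false, if act n then false else true] := by
  induction n generalizing act with
  | zero =>
    by_cases h : act 0 <;> simp [spineMap, h, flipFirst]
  | succ n ih =>
    simp only [List.replicate_succ, List.cons_append, spineMap, List.append_eq]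
    rw [ih]

lemma spineMap_inj {a1 a2 : ℕ → Bool} (h : spineMap a1 = spineMap a2) : a1 = a2 := by
  funext n
  have h0 := congrFun h (List.replicate n true ++ [false, true])
  rw [spineMap_probe, spineMap_probe] at h0
  have h2 : (if a1 n then false else true) = (if a2 n then false else true) := by
    simpa using h0
  by_cases h1 : a1 n <;> by_cases h3 : a2 n <;> simp_all

lemma flip_ne_spine (act : ℕ → Bool) : flipFirst ≠ spineMap act := by
  intro h
  have := congrFun h [true]
  simp [flipFirst, spineMap] at this

/-! ### Coercions of the generators -/

lemma coe_a : ⇑aPerm = flipFirst := rfl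
lemma coe_b (ω : Om) : ⇑(bPerm ω) = spineMap (fun n => decide (ω n ≠ 2)) := rfl
lemma coe_c (ω : Om) : ⇑(cPerm ω) = spineMap (fun n => decide (ω n ≠ 1)) := rfl
lemma coe_d (ω : Om) : ⇑(dPerm ω) = spineMap (fun n => decide (ω n ≠ 0)) := rfl

lemma gens_cases {ω : Om} {s : P} (h : s ∈ gens ω) :
    s = aPerm ∨ s = bPerm ω ∨ s = cPerm ω ∨ s = dPerm ω := by
  simpa [gens] using h

lemma b_ne_a (ω : Om) : bPerm ω ≠ aPerm := fun h =>
  flip_ne_spine _ ((congrArg (fun p : P => ⇑p) h).symm)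
lemma c_ne_a (ω : Om) : cPerm ω ≠ aPerm := fun h =>
  flip_ne_spine _ ((congrArg (fun p : P => ⇑p) h).symm)
lemma d_ne_a (ω : Om) : dPerm ω ≠ aPerm := fun h =>
  flip_ne_spine _ ((congrArg (fun p : P => ⇑p) h).symm)

lemma hGen_ne_a (ω : Om) (q : ℕ) : hGen ω q ≠ aPerm := by
  unfold hGen
  split_ifs <;> [exact b_ne_a ω; exact c_ne_a ω; exact d_ne_a ω]

lemma hGen_act {ω : Om} {q : ℕ} {act : ℕ → Bool}
    (h : ⇑(hGen ω q) = spineMap act) : act (q - 1) = false := by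
  unfold hGen at h
  split_ifs at h with h1 h2
  · rw [coe_b] at h
    rw [← congrFun (spineMap_inj h) (q - 1)]
    simp [h1]
  · rw [coe_c] at h
    rw [← congrFun (spineMap_inj h) (q - 1)]
    simp [h2]
  · have h0 : ∀ x : Fin 3, x ≠ 2 → x ≠ 1 → x = 0 := by decide
    rw [coe_d] at h
    rw [← congrFun (spineMap_inj h) (q - 1)]
    simp [h0 _ h1 h2]

lemma Tl_gens {ω : Om} {s : P} (h : s ∈ gens ω) : Tl ⇑s := by
  rcases gens_cases h with h | h | h | h <;> subst h
  · exact Tl_flip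
  · exact Tl_spine _
  · exact Tl_spine _
  · exact Tl_spine _

lemma Tl_prod {ω : Om} : ∀ l : List P, (∀ s ∈ l, s ∈ gens ω) → Tl ⇑l.prod := by
  intro l
  induction l with
  | nil => intro _; simpa [Equiv.Perm.coe_one] using Tl.id
  | cons s t ih =>
    intro h
    rw [List.prod_cons, Equiv.Perm.coe_mul]
    exact (Tl_gens (h s (by simp))).comp (ih fun x hx => h x (by simp [hx]))

/-! ### Word length machinery -/

def NWL (ν : Om) (f : List Bool → List Bool) : Prop :=
  ∃ l : List P, (∀ s ∈ l, s ∈ gens ν) ∧ ⇑l.prod = f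

lemma wordLength_le (ν : Om) (f : List Bool → List Bool) {l : List P}
    (h1 : ∀ s ∈ l, s ∈ gens ν) (h2 : ⇑l.prod = f) : wordLength ν f ≤ l.length :=
  Nat.sInf_le ⟨l, h1, rfl, h2⟩

lemma NWL.exists_min {ν : Om} {f : List Bool → List Bool} (h : NWL ν f) :
    ∃ l : List P, (∀ s ∈ l, s ∈ gens ν) ∧ l.length = wordLength ν f ∧ ⇑l.prod = f := by
  obtain ⟨l, h1, h2⟩ := h
  have hne : {n | ∃ l : List P, (∀ s ∈ l, s ∈ gens ν) ∧ l.length = n ∧ ⇑l.prod = f}.Nonempty :=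
    ⟨l.length, l, h1, rfl, h2⟩
  exact Nat.sInf_mem hne

lemma NWL.id' (ν : Om) : NWL ν id :=
  ⟨[], by simp, by simp [Equiv.Perm.coe_one]⟩

lemma wordLength_id (ν : Om) : wordLength ν id = 0 :=
  Nat.le_zero.mp (wordLength_le ν id (l := []) (by simp) (by simp [Equiv.Perm.coe_one]))

lemma NWL.single {ν : Om} {s : P} (h : s ∈ gens ν) : NWL ν ⇑s :=
  ⟨[s], by simpa using h, by simp⟩

lemma wordLength_single (ν : Om) {s : P} (h : s ∈ gens ν) {f : List Bool → List Bool}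
    (hf : ⇑s = f) : wordLength ν f ≤ 1 :=
  wordLength_le ν f (l := [s]) (by simpa using h) (by simpa using hf)

lemma NWL.comp {ν : Om} {f g : List Bool → List Bool} (hf : NWL ν f) (hg : NWL ν g) :
    NWL ν (f ∘ g) := by
  obtain ⟨l1, h11, h12⟩ := hf
  obtain ⟨l2, h21, h22⟩ := hg
  refine ⟨l1 ++ l2, fun s hs => ?_, ?_⟩
  · rcases List.mem_append.mp hs with h | h
    exacts [h11 s h, h21 s h]
  · rw [List.prod_append, Equiv.Perm.coe_mul, h12, h22]

lemma wordLength_comp_le {ν : Om} {f g : List Bool → List Bool}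
    (hf : NWL ν f) (hg : NWL ν g) :
    wordLength ν (f ∘ g) ≤ wordLength ν f + wordLength ν g := by
  obtain ⟨l1, h11, h1l, h12⟩ := hf.exists_min
  obtain ⟨l2, h21, h2l, h22⟩ := hg.exists_min
  have := wordLength_le ν (f ∘ g) (l := l1 ++ l2)
    (fun s hs => by rcases List.mem_append.mp hs with h | h; exacts [h11 s h, h21 s h])
    (by rw [List.prod_append, Equiv.Perm.coe_mul, h12, h22])
  simpa [h1l, h2l] using this

/-! ### The distinguished vertices at level `q` -/

lemma shift_iter (ω : Om) (q n : ℕ) : shift^[q] ω n = ω (n + q) := by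
  induction q generalizing n with
  | zero => rfl
  | succ q ih =>
    rw [Function.iterate_succ_apply']
    show (shift^[q] ω) (n + 1) = _
    rw [ih]
    congr 1
    omega

def wT (q : ℕ) : Fin q → Bool := fun _ => true
def wF (q : ℕ) : Fin q → Bool := fun i => decide (i.val + 1 < q)

lemma ofFn_wT (q : ℕ) : List.ofFn (wT q) = List.replicate q true := by
  unfold wT
  exact List.ofFn_const q true

lemma ofFn_wF {q : ℕ} (hq : 1 ≤ q) :
    List.ofFn (wF q) = List.replicate (q - 1) true ++ [false] := by
  apply List.ext_getElem
  · simp; omega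
  · intro i h1 h2
    simp only [List.getElem_ofFn, wF]
    rw [List.getElem_append]
    split_ifs with h
    · simp only [List.length_replicate] at h
      rw [List.getElem_replicate]
      simp only [List.length_ofFn] at h1
      simp; omega
    · simp only [List.length_replicate] at h
      simp only [List.length_ofFn] at h1
      simp only [List.length_replicate]
      simp only [List.getElem_singleton, decide_eq_false_iff_not]
      omega

open Classical in
lemma spine_letter {q : ℕ} (hq : 1 ≤ q) (act : ℕ → Bool) (ν : Om) (cF : ℕ)
    (hTailN : NWL ν (spineMap fun n => act (n + q)))
    (hTailW : wordLength ν (spineMap fun n => act (n + q)) ≤ 1)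
    (hFlipN : NWL ν flipFirst) (hFlipW : wordLength ν flipFirst ≤ 1)
    (hcF : act (q - 1) = true → 1 ≤ cF) :
    (∀ w : Fin q → Bool, NWL ν (fsec (spineMap act) (List.ofFn w))) ∧
    ∑ w : Fin q → Bool, wordLength ν (fsec (spineMap act) (List.ofFn w)) ≤ 1 + cF := by
  have hlen : ∀ w : Fin q → Bool, (List.ofFn w).length = q := fun w => List.length_ofFn
  have key : ∀ w : Fin q → Bool,
      fsec (spineMap act) (List.ofFn w) =
        if w = wT q then spineMap (fun n => act (n + q))
        else if w = wF q then (if act (q - 1) then flipFirst else id)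
        else id := by
    intro w
    rw [fsec_spine, hlen w]
    have e1 : (List.ofFn w = List.replicate q true) ↔ w = wT q := by
      rw [← ofFn_wT q]
      exact ⟨fun h => List.ofFn_injective h, fun h => by rw [h]⟩
    have e2 : (List.ofFn w = List.replicate (q - 1) true ++ [false]) ↔ w = wF q := by
      rw [← ofFn_wF hq]
      exact ⟨fun h => List.ofFn_injective h, fun h => by rw [h]⟩
    by_cases h1 : w = wT q
    · rw [if_pos (e1.mpr h1), if_pos h1]
    · rw [if_neg (fun h => h1 (e1.mp h)), if_neg h1]
      by_cases h2 : w = wF q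
      · rw [if_pos (e2.mpr h2), if_pos h2]
      · rw [if_neg (fun h => h2 (e2.mp h)), if_neg h2]
  constructor
  · intro w
    rw [key w]
    split_ifs
    · exact hTailN
    · exact hFlipN
    · exact NWL.id' ν
    · exact NWL.id' ν
  · have hbound : ∀ w : Fin q → Bool,
        wordLength ν (fsec (spineMap act) (List.ofFn w)) ≤
          (if w = wT q then 1 else 0) + (if w = wF q then cF else 0) := by
      intro w
      rw [key w]
      by_cases h1 : w = wT q
      · rw [if_pos h1]
        refine le_trans hTailW ?_
        rw [if_pos h1]
        omega
      · rw [if_neg h1, if_neg h1]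
        by_cases h2 : w = wF q
        · rw [if_pos h2, if_pos h2]
          by_cases h3 : act (q - 1) = true
          · rw [if_pos h3]
            exact le_trans hFlipW (by have := hcF h3; omega)
          · rw [if_neg h3]
            simp [wordLength_id]
        · rw [if_neg h2, if_neg h2]
          simp [wordLength_id]
    calc ∑ w : Fin q → Bool, wordLength ν (fsec (spineMap act) (List.ofFn w))
        ≤ ∑ w : Fin q → Bool,
            ((if w = wT q then 1 else 0) + (if w = wF q then cF else 0)) :=
          Finset.sum_le_sum fun w _ => hbound w
      _ = 1 + cF := by
          rw [Finset.sum_add_distrib]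
          simp [Finset.sum_ite_eq' Finset.univ]

open Classical in
lemma spinal_letter {ω : Om} {q : ℕ} (hq : 1 ≤ q) {s : P} (act : ℕ → Bool)
    (hcoe : ⇑s = spineMap act) (hsa : s ≠ aPerm)
    (hTailN : NWL (shift^[q] ω) (spineMap fun n => act (n + q)))
    (hTailW : wordLength (shift^[q] ω) (spineMap fun n => act (n + q)) ≤ 1) :
    (∀ w : Fin q → Bool, NWL (shift^[q] ω) (fsec ⇑s (List.ofFn w))) ∧
    (∑ w : Fin q → Bool, wordLength (shift^[q] ω) (fsec ⇑s (List.ofFn w))) +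
      (if s = hGen ω q then 1 else 0) ≤ 2 * (if s = aPerm then 0 else 1) := by
  set ν := shift^[q] ω with hν
  set cF : ℕ := if s = hGen ω q then 0 else 1 with hcF
  have hflipN : NWL ν flipFirst := ⟨[aPerm], by simp [gens], by rw [List.prod_singleton, coe_a]⟩
  have hflipW : wordLength ν flipFirst ≤ 1 :=
    wordLength_le ν _ (l := [aPerm]) (by simp [gens]) (by rw [List.prod_singleton, coe_a])
  have hc : act (q - 1) = true → 1 ≤ cF := by
    intro ha
    rw [hcF]
    split_ifs with hh
    · exfalso
      have h0 : act (q - 1) = false := hGen_act (ω := ω) (q := q) (by rw [← hh, hcoe])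
      rw [h0] at ha
      exact Bool.false_ne_true ha
    · exact le_refl 1
  obtain ⟨hN, hS⟩ := spine_letter hq act ν cF hTailN hTailW hflipN hflipW hc
  refine ⟨fun w => by rw [hcoe]; exact hN w, ?_⟩
  have hsum : (∑ w : Fin q → Bool, wordLength ν (fsec ⇑s (List.ofFn w))) =
      ∑ w : Fin q → Bool, wordLength ν (fsec (spineMap act) (List.ofFn w)) := by
    rw [hcoe]
  rw [hsum, if_neg hsa]
  by_cases hh : s = hGen ω q
  · rw [if_pos hh]
    have h0 : cF = 0 := by rw [hcF, if_pos hh]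
    rw [h0] at hS
    omega
  · rw [if_neg hh]
    have h0 : cF = 1 := by rw [hcF, if_neg hh]
    rw [h0] at hS
    omega

open Classical in
lemma letter_bound {ω : Om} {q : ℕ} (hq : 1 ≤ q) {s : P} (hs : s ∈ gens ω) :
    (∀ w : Fin q → Bool, NWL (shift^[q] ω) (fsec ⇑s (List.ofFn w))) ∧
    (∑ w : Fin q → Bool, wordLength (shift^[q] ω) (fsec ⇑s (List.ofFn w))) +
      (if s = hGen ω q then 1 else 0) ≤ 2 * (if s = aPerm then 0 else 1) := by
  have e2 : (fun n => decide ((shift^[q] ω) n ≠ 2)) = (fun n => decide (ω (n + q) ≠ 2)) := by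
    funext n; rw [shift_iter]
  have e1 : (fun n => decide ((shift^[q] ω) n ≠ 1)) = (fun n => decide (ω (n + q) ≠ 1)) := by
    funext n; rw [shift_iter]
  have e0 : (fun n => decide ((shift^[q] ω) n ≠ 0)) = (fun n => decide (ω (n + q) ≠ 0)) := by
    funext n; rw [shift_iter]
  rcases gens_cases hs with h | h | h | h
  · subst h
    have hsec : ∀ w : Fin q → Bool, fsec ⇑aPerm (List.ofFn w) = id := by
      intro w
      rw [coe_a]
      apply fsec_flip
      intro hnil
      have h0 := congrArg List.length hnil
      simp only [List.length_ofFn, List.length_nil] at h0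
      omega
    refine ⟨fun w => by rw [hsec w]; exact NWL.id' _, ?_⟩
    rw [if_neg (fun hh => hGen_ne_a ω q hh.symm), if_pos rfl]
    have h0 : ∀ w : Fin q → Bool, wordLength (shift^[q] ω) (fsec ⇑aPerm (List.ofFn w)) = 0 :=
      fun w => by rw [hsec w, wordLength_id]
    simp [h0]
  · subst h
    refine spinal_letter hq _ (coe_b ω) (b_ne_a ω)
      ⟨[bPerm (shift^[q] ω)], by simp [gens], by rw [List.prod_singleton, coe_b, e2]⟩ ?_
    exact wordLength_le _ _ (l := [bPerm (shift^[q] ω)]) (by simp [gens])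
      (by rw [List.prod_singleton, coe_b, e2])
  · subst h
    refine spinal_letter hq _ (coe_c ω) (c_ne_a ω)
      ⟨[cPerm (shift^[q] ω)], by simp [gens], by rw [List.prod_singleton, coe_c, e1]⟩ ?_
    exact wordLength_le _ _ (l := [cPerm (shift^[q] ω)]) (by simp [gens])
      (by rw [List.prod_singleton, coe_c, e1])
  · subst h
    refine spinal_letter hq _ (coe_d ω) (d_ne_a ω)
      ⟨[dPerm (shift^[q] ω)], by simp [gens], by rw [List.prod_singleton, coe_d, e0]⟩ ?_
    exact wordLength_le _ _ (l := [dPerm (shift^[q] ω)]) (by simp [gens])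
      (by rw [List.prod_singleton, coe_d, e0])

/-! ### Reindexing level-`q` vertices by a treelike permutation -/

def vimg (p : P) (q : ℕ) (w : Fin q → Bool) : Fin q → Bool :=
  fun i => (⇑p (List.ofFn w)).getD i false

lemma ofFn_vimg {p : P} (hp : Tl ⇑p) {q : ℕ} (w : Fin q → Bool) :
    List.ofFn (vimg p q w) = ⇑p (List.ofFn w) := by
  have hl : (⇑p (List.ofFn w)).length = q := by rw [hp.1]; exact List.length_ofFn
  apply List.ext_getElem
  · simp [hl]
  · intro i h1 h2
    simp only [List.getElem_ofFn, vimg]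
    exact List.getD_eq_getElem _ _ (by omega)

lemma vimg_bij {p : P} (hp : Tl ⇑p) (q : ℕ) : Function.Bijective (vimg p q) := by
  apply Finite.injective_iff_bijective.mp
  intro w w' h
  have h0 := congrArg List.ofFn h
  rw [ofFn_vimg hp, ofFn_vimg hp] at h0
  exact List.ofFn_injective (p.injective h0)

/-! ### The master estimate -/

open Classical in
lemma master {ω : Om} {q : ℕ} (hq : 1 ≤ q) :
    ∀ l : List P, (∀ s ∈ l, s ∈ gens ω) →
    (∀ w : Fin q → Bool, NWL (shift^[q] ω) (fsec ⇑l.prod (List.ofFn w))) ∧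
    (∑ w : Fin q → Bool, wordLength (shift^[q] ω) (fsec ⇑l.prod (List.ofFn w)))
      + countOf (hGen ω q) l
      ≤ 2 * l.countP (fun x => decide (x ≠ aPerm)) := by
  intro l
  induction l with
  | nil =>
    intro _
    have hsec : ∀ w : Fin q → Bool, fsec ⇑(([] : List P).prod) (List.ofFn w) = id := by
      intro w
      rw [List.prod_nil, Equiv.Perm.coe_one]
      exact fsec_id _
    refine ⟨fun w => by rw [hsec w]; exact NWL.id' _, ?_⟩
    simp [hsec, fsec_id, wordLength_id, countOf]
  | cons s t ih =>
    intro hmem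
    have hs : s ∈ gens ω := hmem s (by simp)
    have ht : ∀ x ∈ t, x ∈ gens ω := fun x hx => hmem x (by simp [hx])
    obtain ⟨ihN, ihS⟩ := ih ht
    obtain ⟨lN, lS⟩ := letter_bound (q := q) hq hs
    have hTs : Tl ⇑s := Tl_gens hs
    have hTp : Tl ⇑t.prod := Tl_prod t ht
    have hsplit : ∀ w : Fin q → Bool,
        fsec ⇑(s :: t).prod (List.ofFn w) =
          fsec ⇑s (List.ofFn (vimg t.prod q w)) ∘ fsec ⇑t.prod (List.ofFn w) := by
      intro w
      rw [List.prod_cons, Equiv.Perm.coe_mul, fsec_comp hTs hTp, ofFn_vimg hTp]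
    constructor
    · intro w
      rw [hsplit w]
      exact (lN _).comp (ihN w)
    · have hle : ∀ w : Fin q → Bool,
          wordLength (shift^[q] ω) (fsec ⇑(s :: t).prod (List.ofFn w)) ≤
            wordLength (shift^[q] ω) (fsec ⇑s (List.ofFn (vimg t.prod q w))) +
            wordLength (shift^[q] ω) (fsec ⇑t.prod (List.ofFn w)) := by
        intro w
        rw [hsplit w]
        exact wordLength_comp_le (lN _) (ihN w)
      have hsum : (∑ w : Fin q → Bool,
            wordLength (shift^[q] ω) (fsec ⇑(s :: t).prod (List.ofFn w)))
          ≤ (∑ w : Fin q → Bool, wordLength (shift^[q] ω) (fsec ⇑s (List.ofFn w))) +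
            ∑ w : Fin q → Bool, wordLength (shift^[q] ω) (fsec ⇑t.prod (List.ofFn w)) := by
        calc (∑ w : Fin q → Bool,
            wordLength (shift^[q] ω) (fsec ⇑(s :: t).prod (List.ofFn w)))
            ≤ ∑ w : Fin q → Bool,
              (wordLength (shift^[q] ω) (fsec ⇑s (List.ofFn (vimg t.prod q w))) +
               wordLength (shift^[q] ω) (fsec ⇑t.prod (List.ofFn w))) :=
              Finset.sum_le_sum fun w _ => hle w
          _ = _ := by
              rw [Finset.sum_add_distrib]
              congr 1
              exact (vimg_bij hTp q).sum_comp
                (fun w => wordLength (shift^[q] ω) (fsec ⇑s (List.ofFn w)))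
      have hcnt : countOf (hGen ω q) (s :: t) =
          countOf (hGen ω q) t + (if s = hGen ω q then 1 else 0) := by
        simp only [countOf, List.countP_cons]
        split_ifs with h1 h2 h2 <;> simp_all
      have hcnt2 : (s :: t).countP (fun x => decide (x ≠ aPerm)) =
          t.countP (fun x => decide (x ≠ aPerm)) + (if s = aPerm then 0 else 1) := by
        simp only [List.countP_cons]
        split_ifs with h1 h2 h2 <;> simp_all
      rw [hcnt, hcnt2]
      omega

/-! ### Geodesic words alternate -/

lemma spine_comp_self (act : ℕ → Bool) : spineMap act ∘ spineMap act = id :=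
  funext fun v => spineMap_invol act v

lemma spine_comp_third {a1 a2 a3 : ℕ → Bool} (h : ∀ n, xor (a1 n) (a2 n) = a3 n) :
    spineMap a1 ∘ spineMap a2 = spineMap a3 := by
  funext v
  simp only [Function.comp_apply, spineMap_comp]
  congr 1
  funext n
  exact h n

lemma xor_bc (ω : Om) (n : ℕ) :
    xor (decide (ω n ≠ 2)) (decide (ω n ≠ 1)) = decide (ω n ≠ 0) := by
  have h : ∀ y : Fin 3, xor (decide (y ≠ 2)) (decide (y ≠ 1)) = decide (y ≠ 0) := by decide
  exact h (ω n)

lemma xor_bd (ω : Om) (n : ℕ) :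
    xor (decide (ω n ≠ 2)) (decide (ω n ≠ 0)) = decide (ω n ≠ 1) := by
  have h : ∀ y : Fin 3, xor (decide (y ≠ 2)) (decide (y ≠ 0)) = decide (y ≠ 1) := by decide
  exact h (ω n)

lemma xor_cd (ω : Om) (n : ℕ) :
    xor (decide (ω n ≠ 1)) (decide (ω n ≠ 0)) = decide (ω n ≠ 2) := by
  have h : ∀ y : Fin 3, xor (decide (y ≠ 1)) (decide (y ≠ 0)) = decide (y ≠ 2) := by decide
  exact h (ω n)

lemma pair_shorten {ω : Om} {s t : P} (hs : s ∈ gens ω) (ht : t ∈ gens ω)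
    (hsa : s ≠ aPerm) (hta : t ≠ aPerm) :
    ∃ u : List P, (∀ x ∈ u, x ∈ gens ω) ∧ u.length ≤ 1 ∧ ⇑u.prod = ⇑s ∘ ⇑t := by
  have hid : ∀ x : P, ⇑x = ⇑x → ⇑(([] : List P).prod) = ⇑x ∘ ⇑x → True := fun _ _ _ => trivial
  have hself : ∀ act : ℕ → Bool, ⇑(([] : List P).prod) = spineMap act ∘ spineMap act := by
    intro act
    rw [List.prod_nil, Equiv.Perm.coe_one, spine_comp_self]
  have hsingle : ∀ x : P, ⇑([x].prod) = ⇑x := fun x => by rw [List.prod_singleton]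
  rcases gens_cases hs with h | h | h | h
  · exact absurd h hsa
  all_goals rcases gens_cases ht with h' | h' | h' | h'
  · exact absurd h' hta
  · exact ⟨[], by simp, by simp, by rw [h, h', coe_b]; exact hself _⟩
  · refine ⟨[dPerm ω], by simp [gens], by simp, ?_⟩
    rw [h, h', hsingle, coe_b, coe_c, coe_d]
    exact (spine_comp_third (xor_bc ω)).symm
  · refine ⟨[cPerm ω], by simp [gens], by simp, ?_⟩
    rw [h, h', hsingle, coe_b, coe_d, coe_c]
    exact (spine_comp_third (xor_bd ω)).symm
  · exact absurd h' hta
  · refine ⟨[dPerm ω], by simp [gens], by simp, ?_⟩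
    rw [h, h', hsingle, coe_c, coe_b, coe_d]
    exact (spine_comp_third fun n => by rw [Bool.xor_comm]; exact xor_bc ω n).symm
  · exact ⟨[], by simp, by simp, by rw [h, h', coe_c]; exact hself _⟩
  · refine ⟨[bPerm ω], by simp [gens], by simp, ?_⟩
    rw [h, h', hsingle, coe_c, coe_d, coe_b]
    exact (spine_comp_third (xor_cd ω)).symm
  · exact absurd h' hta
  · refine ⟨[cPerm ω], by simp [gens], by simp, ?_⟩
    rw [h, h', hsingle, coe_d, coe_b, coe_c]
    exact (spine_comp_third fun n => by rw [Bool.xor_comm]; exact xor_bd ω n).symm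
  · refine ⟨[bPerm ω], by simp [gens], by simp, ?_⟩
    rw [h, h', hsingle, coe_d, coe_c, coe_b]
    exact (spine_comp_third fun n => by rw [Bool.xor_comm]; exact xor_cd ω n).symm
  · exact ⟨[], by simp, by simp, by rw [h, h', coe_d]; exact hself _⟩

open Classical in
lemma countP_cons_a (m : List P) :
    List.countP (fun x => decide (x ≠ aPerm)) (aPerm :: m) =
      List.countP (fun x => decide (x ≠ aPerm)) m := by
  simp [List.countP_cons]

open Classical in
lemma countP_cons_le (x : P) (m : List P) :
    List.countP (fun y => decide (y ≠ aPerm)) (x :: m) ≤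
      List.countP (fun y => decide (y ≠ aPerm)) m + 1 := by
  simp only [List.countP_cons]
  split_ifs <;> omega

lemma wordLength_prod_le_length {ω : Om} (l : List P) (hm : ∀ x ∈ l, x ∈ gens ω) :
    wordLength ω ⇑l.prod ≤ l.length :=
  wordLength_le ω _ hm rfl

lemma wordLength_cons_le {ω : Om} {x : P} (hx : x ∈ gens ω) (m : List P)
    (hm : ∀ y ∈ m, y ∈ gens ω) :
    wordLength ω ⇑(x :: m).prod ≤ 1 + wordLength ω ⇑m.prod := by
  obtain ⟨l2, h21, h2l, h22⟩ := NWL.exists_min (⟨m, hm, rfl⟩ : NWL ω ⇑m.prod)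
  have h0 := wordLength_le ω ⇑(x :: m).prod (l := x :: l2)
    (by intro y hy; rcases List.mem_cons.mp hy with h | h; exacts [h ▸ hx, h21 y h])
    (by rw [List.prod_cons, List.prod_cons, Equiv.Perm.coe_mul, Equiv.Perm.coe_mul, h22])
  rw [List.length_cons, h2l] at h0
  omega

open Classical in
lemma alternation {ω : Om} : ∀ (n : ℕ) (l : List P), l.length ≤ n →
    (∀ s ∈ l, s ∈ gens ω) → l.length = wordLength ω ⇑l.prod →
    2 * l.countP (fun x => decide (x ≠ aPerm)) ≤ l.length + 1 := by
  intro n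
  induction n with
  | zero =>
    intro l hl _ _
    have : l = [] := List.length_eq_zero_iff.mp (Nat.le_zero.mp hl)
    subst this
    simp
  | succ n ih =>
    intro l hl hmem hgeo
    match l with
    | [] => simp
    | [s] =>
      simp only [List.countP_cons, List.countP_nil, List.length_cons, List.length_nil]
      split_ifs <;> omega
    | s :: t :: r =>
      have hs : s ∈ gens ω := hmem s (by simp)
      have ht : t ∈ gens ω := hmem t (by simp)
      have hr : ∀ x ∈ r, x ∈ gens ω := fun x hx => hmem x (by simp [hx])
      have htr : ∀ x ∈ t :: r, x ∈ gens ω := fun x hx => hmem x (by simp [hx])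
      have hlen : (s :: t :: r).length = r.length + 2 := by simp
      by_cases hA : s ≠ aPerm ∧ t ≠ aPerm
      · exfalso
        obtain ⟨u, hu1, hu2, hu3⟩ := pair_shorten hs ht hA.1 hA.2
        have hW := wordLength_le ω ⇑(s :: t :: r).prod (l := u ++ r)
          (by intro y hy; rcases List.mem_append.mp hy with h | h
              exacts [hu1 y h, hr y h])
          (by rw [List.prod_append, Equiv.Perm.coe_mul, hu3,
                List.prod_cons, List.prod_cons, Equiv.Perm.coe_mul, Equiv.Perm.coe_mul,
                Function.comp_assoc])
        have hlu : (u ++ r).length ≤ 1 + r.length := by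
          rw [List.length_append]; omega
        rw [← hgeo, hlen] at hW
        omega
      · have h2 : wordLength ω ⇑(t :: r).prod = (t :: r).length := by
          have ha := wordLength_cons_le hs (t :: r) htr
          have hb := wordLength_prod_le_length (t :: r) htr
          rw [← hgeo] at ha
          simp only [List.length_cons] at *
          omega
        rcases not_and_or.mp hA with h | h
        · push_neg at h
          subst h
          have hc := ih (t :: r) (by simp only [List.length_cons] at hl ⊢; omega) htr h2.symm
          rw [countP_cons_a]
          simp only [List.length_cons] at hc ⊢
          omega
        · push_neg at h
          subst h
          have h3 : wordLength ω ⇑r.prod = r.length := by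
            have ha := wordLength_cons_le ht r hr
            have hb := wordLength_prod_le_length r hr
            rw [h2] at ha
            simp only [List.length_cons] at *
            omega
          have hc := ih r (by simp only [List.length_cons] at hl; omega) hr h3.symm
          have hb1 := countP_cons_le s (aPerm :: r)
          rw [countP_cons_a] at hb1
          simp only [List.length_cons] at hc ⊢
          omega

end S14

/-- Let `q ≥ 1` and let `h_q` be `b_ω`, `c_ω` or `d_ω` according as
`ω_q = 2, 1, 0`. Then for every `g ∈ G_ω` and every geodesic representation `g = s₁⋯sₙ`,
`L_q(g) ≤ |g| + 1 − #{i : sᵢ = h_q}`. -/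

theorem statement14 (ω : Om) (q : ℕ) (hq : 1 ≤ q)
    (g : Equiv.Perm (List Bool)) (hg : g ∈ Gw ω)
    (l : List (Equiv.Perm (List Bool))) (hmem : ∀ s ∈ l, s ∈ gens ω)
    (hprod : l.prod = g) (hgeo : l.length = wordLength ω ⇑g) :
    (Lq ω q g : ℝ) ≤ (wordLength ω ⇑g : ℝ) + 1 - (countOf (hGen ω q) l : ℝ) := by
  subst hprod
  have hM := (S14.master hq l hmem).2
  have hA := S14.alternation l.length l le_rfl hmem hgeo
  have hLq : Lq ω q l.prod = ∑ w : Fin q → Bool,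
      wordLength (shift^[q] ω) (S14.fsec ⇑l.prod (List.ofFn w)) := rfl
  have hkey : Lq ω q l.prod + countOf (hGen ω q) l ≤ l.length + 1 := by
    rw [hLq]; omega
  rw [← hgeo]
  have hkey' : (Lq ω q l.prod : ℝ) + (countOf (hGen ω q) l : ℝ) ≤ (l.length : ℝ) + 1 := by
    exact_mod_cast hkey
  linarith
end

section
/- Let G be a group generated by a tuple A = (a_1, …, a_k) and also generated by a tuple B = (b_1, …, b_n). Let A' = (a_1, …, a_k, 1, …, 1) ∈ G^{k+n} be A with n identity entries appended, and let B' = (b_1, …, b_n, 1, …, 1) ∈ G^{n+k} be B with k identity entries appended. Then A' can be transformed into B' by a finite sequence of Nielsen transformations. -/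
/-- An elementary Nielsen transformation on an `m`-tuple of elements of a group `G`:
(i) exchanging two entries, (ii) replacing an entry by its inverse, (iii) replacing an
entry `gᵢ` by `gᵢgⱼ` for some `j ≠ i`. -/
inductive NielsenStep {G : Type*} [Group G] {m : ℕ} : (Fin m → G) → (Fin m → G) → Prop
  | swap (t : Fin m → G) (i j : Fin m) : NielsenStep t (t ∘ Equiv.swap i j)
  | inv (t : Fin m → G) (i : Fin m) : NielsenStep t (Function.update t i (t i)⁻¹)
  | mul (t : Fin m → G) (i j : Fin m) (hij : i ≠ j) :
      NielsenStep t (Function.update t i (t i * t j))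

namespace NielsenAux

variable {G : Type*} [Group G] {m : ℕ}

local notation "RT" => Relation.ReflTransGen (NielsenStep (G := G) (m := m))

lemma step_symm {t s : Fin m → G} (h : NielsenStep t s) :
    Relation.ReflTransGen NielsenStep s t := by
  cases h with
  | swap i j =>
      have h1 := NielsenStep.swap (t ∘ Equiv.swap i j) i j
      have he : (t ∘ Equiv.swap i j) ∘ Equiv.swap i j = t := by
        funext x; simp
      rw [he] at h1
      exact Relation.ReflTransGen.single h1
  | inv i =>
      have h1 := NielsenStep.inv (Function.update t i (t i)⁻¹) i
      have he : Function.update (Function.update t i (t i)⁻¹) i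
          ((Function.update t i (t i)⁻¹) i)⁻¹ = t := by
        simp [Function.update_idem]
      rw [he] at h1
      exact Relation.ReflTransGen.single h1
  | mul i j hij =>
      set s := Function.update t i (t i * t j) with hs
      have hji : s j = t j := Function.update_of_ne (Ne.symm hij) _ _
      refine Relation.ReflTransGen.head (NielsenStep.inv s j) ?_
      set s1 := Function.update s j (s j)⁻¹ with hs1
      refine Relation.ReflTransGen.head (NielsenStep.mul s1 i j hij) ?_
      set s2 := Function.update s1 i (s1 i * s1 j) with hs2
      refine Relation.ReflTransGen.head (NielsenStep.inv s2 j) ?_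
      have : Function.update s2 j (s2 j)⁻¹ = t := by
        funext x
        rcases eq_or_ne x j with rfl | hxj
        · simp [hs2, hs1, hs, Function.update_of_ne hij, Function.update_of_ne (Ne.symm hij), hji]
        · rcases eq_or_ne x i with rfl | hxi
          · simp [hs2, hs1, hs, Function.update_of_ne hxj, Function.update_of_ne hij,
              Function.update_of_ne (Ne.symm hij), mul_assoc, hji]
          · simp [hs2, hs1, hs, Function.update_of_ne hxj, Function.update_of_ne hxi]
      rw [this]

lemma rt_symm {t s : Fin m → G} (h : Relation.ReflTransGen NielsenStep t s) :
    Relation.ReflTransGen NielsenStep s t := by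
  induction h with
  | refl => exact Relation.ReflTransGen.refl
  | tail _ hbc ih => exact (step_symm hbc).trans ih

lemma rt_perm (t : Fin m → G) (e : Equiv.Perm (Fin m)) :
    Relation.ReflTransGen NielsenStep t (t ∘ e) := by
  have key : ∀ e : Equiv.Perm (Fin m), ∀ t : Fin m → G,
      Relation.ReflTransGen NielsenStep t (t ∘ e) := fun e =>
    Equiv.Perm.swap_induction_on
      (motive := fun e => ∀ t : Fin m → G, Relation.ReflTransGen NielsenStep t (t ∘ e)) e
      (fun t => Relation.ReflTransGen.refl)
      (fun f x y hxy ih t => by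
        have h1 : Relation.ReflTransGen NielsenStep t (t ∘ Equiv.swap x y) :=
          Relation.ReflTransGen.single (NielsenStep.swap t x y)
        have h2 := ih (t ∘ Equiv.swap x y)
        have h3 : (t ∘ Equiv.swap x y) ∘ f = t ∘ (Equiv.swap x y * f) := rfl
        rw [h3] at h2
        exact h1.trans h2)
  exact key e t

lemma rt_update_mul (t : Fin m → G) (i : Fin m) {g : G}
    (hg : g ∈ Subgroup.closure (Set.range fun j : {j : Fin m // j ≠ i} => t j)) :
    Relation.ReflTransGen NielsenStep t (Function.update t i (t i * g)) := by
  have H : ∀ c : G, Relation.ReflTransGen NielsenStep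
      (Function.update t i c) (Function.update t i (c * g)) := by
    induction hg using Subgroup.closure_induction with
    | mem x hx =>
        obtain ⟨j, rfl⟩ := hx
        intro c
        have h1 := NielsenStep.mul (Function.update t i c) i j (Ne.symm j.2)
        have he : Function.update (Function.update t i c) i
            ((Function.update t i c) i * (Function.update t i c) j) =
            Function.update t i (c * t j) := by
          rw [Function.update_idem, Function.update_self, Function.update_of_ne j.2]
        rw [he] at h1
        exact Relation.ReflTransGen.single h1
    | one => intro c; rw [mul_one]
    | mul x y hx hy ihx ihy =>
        intro c
        have := (ihx c).trans (ihy (c * x))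
        rwa [mul_assoc] at this
    | inv x hx ihx =>
        intro c
        have h1 := ihx (c * x⁻¹)
        rw [inv_mul_cancel_right] at h1
        exact rt_symm h1
  have := H (t i)
  rwa [Function.update_eq_self] at this

lemma rt_of_core (K : Set (Fin m)) (F : Finset (Fin m)) :
    ∀ t s : Fin m → G,
    Subgroup.closure (t '' K) = ⊤ →
    (∀ i ∈ F, i ∉ K) →
    (∀ i ∉ F, t i = s i) →
    Relation.ReflTransGen NielsenStep t s := by
  classical
  induction F using Finset.induction_on with
  | empty =>
      intro t s _ _ hout
      have : t = s := funext fun i => hout i (by simp)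
      rw [this]
  | insert _ _ hiF ih =>
      rename_i i F
      intro t s hK hdisj hout
      have hiK : i ∉ K := hdisj i (Finset.mem_insert_self i F)
      have hgen : ∀ g : G, g ∈ Subgroup.closure
          (Set.range fun j : {j : Fin m // j ≠ i} => t j) := by
        have hsub : t '' K ⊆ Set.range fun j : {j : Fin m // j ≠ i} => t j := by
          rintro x ⟨j, hjK, rfl⟩
          exact ⟨⟨j, by rintro rfl; exact hiK hjK⟩, rfl⟩
        have := Subgroup.closure_mono hsub
        rw [hK] at this
        intro g
        exact this (Subgroup.mem_top g)
      have h1 : Relation.ReflTransGen NielsenStep t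
          (Function.update t i (t i * ((t i)⁻¹ * s i))) :=
        rt_update_mul t i (hgen _)
      rw [mul_inv_cancel_left] at h1
      refine h1.trans (ih (Function.update t i (s i)) s ?_ ?_ ?_)
      · have himg : Function.update t i (s i) '' K = t '' K := by
          apply Set.image_congr
          intro j hjK
          exact Function.update_of_ne (by rintro rfl; exact hiK hjK) _ _
        rw [himg, hK]
      · exact fun j hjF => hdisj j (Finset.mem_insert_of_mem hjF)
      · intro j hjF
        rcases eq_or_ne j i with rfl | hji
        · exact Function.update_self _ _ _
        · rw [Function.update_of_ne hji]
          exact hout j (by simp [hji, hjF])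

end NielsenAux

lemma append_left' {α : Sort*} {k n : ℕ} (u : Fin k → α) (v : Fin n → α)
    (i : Fin (k + n)) (h : (i : ℕ) < k) : Fin.append u v i = u ⟨i, h⟩ := by
  have hi : Fin.castAdd n ⟨(i : ℕ), h⟩ = i := Fin.ext rfl
  have := Fin.append_left u v ⟨(i : ℕ), h⟩
  rwa [hi] at this

lemma append_right' {α : Sort*} {k n : ℕ} (u : Fin k → α) (v : Fin n → α)
    (i : Fin (k + n)) (h : ¬ (i : ℕ) < k) : Fin.append u v i = v ⟨(i : ℕ) - k, by omega⟩ := by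
  obtain ⟨iv, hlt⟩ := i
  simp only at h ⊢
  have hi : Fin.natAdd k ⟨iv - k, by omega⟩ = (⟨iv, hlt⟩ : Fin (k + n)) :=
    Fin.ext (by simp; omega)
  have h2 := Fin.append_right u v ⟨iv - k, by omega⟩
  rwa [hi] at h2



/-- Let `G` be generated by the tuple `A = (a₁,…,a_k)` and also by the
tuple `B = (b₁,…,bₙ)`. Let `A' ∈ G^{k+n}` be `A` with `n` identity entries appended and
`B' ∈ G^{n+k}` be `B` with `k` identity entries appended. Then `A'` can be transformed into
`B'` by a finite sequence of Nielsen transformations. -/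
theorem statement19 {G : Type*} [Group G] (k n : ℕ)
    (a : Fin k → G) (b : Fin n → G)
    (ha : Subgroup.closure (Set.range a) = ⊤)
    (hb : Subgroup.closure (Set.range b) = ⊤) :
    Relation.ReflTransGen (NielsenStep (G := G) (m := k + n))
      (Fin.append a fun _ : Fin n => (1 : G))
      (fun i : Fin (k + n) =>
        Fin.append b (fun _ : Fin k => (1 : G)) (Fin.cast (Nat.add_comm k n) i)) := by
  classical
  set A' : Fin (k + n) → G := Fin.append a fun _ => 1 with hA'
  set mid : Fin (k + n) → G := Fin.append a b with hmid
  set z : Fin (k + n) → G := Fin.append (fun _ : Fin k => (1 : G)) b with hz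
  have step1 : Relation.ReflTransGen NielsenStep A' mid := by
    refine NielsenAux.rt_of_core {i : Fin (k + n) | (i : ℕ) < k}
      (Finset.univ.filter fun i : Fin (k + n) => ¬ (i : ℕ) < k) A' mid ?_ ?_ ?_
    · rw [eq_top_iff, ← ha]
      refine Subgroup.closure_mono ?_
      rintro x ⟨i, rfl⟩
      exact ⟨Fin.castAdd n i, i.2, Fin.append_left a _ i⟩
    · intro i hi
      simpa using (Finset.mem_filter.mp hi).2
    · intro i hi
      have h : (i : ℕ) < k := by simpa using hi
      rw [hA', hmid, append_left' a _ i h, append_left' a b i h]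
  have step2 : Relation.ReflTransGen NielsenStep mid z := by
    refine NielsenAux.rt_of_core {i : Fin (k + n) | ¬ (i : ℕ) < k}
      (Finset.univ.filter fun i : Fin (k + n) => (i : ℕ) < k) mid z ?_ ?_ ?_
    · rw [eq_top_iff, ← hb]
      refine Subgroup.closure_mono ?_
      rintro x ⟨i, rfl⟩
      exact ⟨Fin.natAdd k i, by simp, Fin.append_right a b i⟩
    · intro i hi
      simpa using (Finset.mem_filter.mp hi).2
    · intro i hi
      have h : ¬ (i : ℕ) < k := by simpa using hi
      rw [hmid, hz, append_right' a b i h, append_right' _ b i h]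
  have step3 : Relation.ReflTransGen NielsenStep z
      (fun i : Fin (k + n) =>
        Fin.append b (fun _ : Fin k => (1 : G)) (Fin.cast (Nat.add_comm k n) i)) := by
    have key : ∀ j : Fin (n + k),
        Fin.append (fun _ : Fin k => (1 : G)) b (finAddFlip j) =
          Fin.append b (fun _ : Fin k => (1 : G)) j := by
      intro j
      refine Fin.addCases (fun i => ?_) (fun i => ?_) j
      · rw [finAddFlip_apply_castAdd, Fin.append_right, Fin.append_left]
      · rw [finAddFlip_apply_natAdd, Fin.append_left, Fin.append_right]
    have he : z ∘ ((finCongr (Nat.add_comm k n)).trans finAddFlip) =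
        (fun i : Fin (k + n) =>
          Fin.append b (fun _ : Fin k => (1 : G)) (Fin.cast (Nat.add_comm k n) i)) := by
      funext i
      simpa using key (Fin.cast (Nat.add_comm k n) i)
    have h4 := NielsenAux.rt_perm z ((finCongr (Nat.add_comm k n)).trans finAddFlip : Equiv.Perm _)
    rwa [he] at h4
  exact (step1.trans step2).trans step3
end
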